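/- arXiv:1810.03023 — 2 statements merged into one kernel-verified Lean document; each statement's English description precedes it below -/
import Mathlib

section
/- Let n, k be positive natural numbers and w₀ ∈ ℝ. Let W : ℝ → Matrix (Fin n) (Fin k) ℝ be such that each entry w ↦ (W w) i j has derivative E i j at w₀, let v : ℝ → (Fin k → ℝ) be such that each component w ↦ v w j has derivative v' j at w₀, and let b : Fin n → ℝ. Define the tanh gate g : ℝ → (Fin n → ℝ) by g w i = tanh(((W w).mulVec (v w)) i + b i). Then for every i, the function w ↦ g w i has derivative (1 − (g w₀ i)²) · ( ((W w₀).mulVec v') i + (E.mulVec (v w₀)) i ) at w₀. -/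
lemma Real.hasDerivAt_tanh' (x : ℝ) :
    HasDerivAt Real.tanh (1 - Real.tanh x ^ 2) x := by
  have hc : Real.cosh x ≠ 0 := (Real.cosh_pos x).ne'
  have h : HasDerivAt (fun y => Real.sinh y / Real.cosh y)
      ((Real.cosh x * Real.cosh x - Real.sinh x * Real.sinh x) / Real.cosh x ^ 2) x :=
    (Real.hasDerivAt_sinh x).div (Real.hasDerivAt_cosh x) hc
  have heq : (fun y => Real.sinh y / Real.cosh y) = Real.tanh := by
    funext y; rw [Real.tanh_eq_sinh_div_cosh]
  rw [heq] at h
  convert h using 1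
  rw [Real.tanh_eq_sinh_div_cosh, div_pow]
  field_simp

/-- Tanh-gate case of Lemma 1: derivative of an LSTM tanh gate
`g w i = tanh((W w · v w) i + b i)` with respect to the scalar parameter `w`. -/
theorem lstm_tanh_gate_hasDerivAt
    (n k : ℕ) (hn : 0 < n) (hk : 0 < k) (w₀ : ℝ)
    (W : ℝ → Matrix (Fin n) (Fin k) ℝ) (E : Matrix (Fin n) (Fin k) ℝ)
    (hW : ∀ i j, HasDerivAt (fun w => W w i j) (E i j) w₀)
    (v : ℝ → Fin k → ℝ) (v' : Fin k → ℝ)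
    (hv : ∀ j, HasDerivAt (fun w => v w j) (v' j) w₀)
    (b : Fin n → ℝ)
    (g : ℝ → Fin n → ℝ)
    (hg : ∀ w i, g w i = Real.tanh (((W w).mulVec (v w)) i + b i)) :
    ∀ i, HasDerivAt (fun w => g w i)
      ((1 - (g w₀ i) ^ 2) * (((W w₀).mulVec v') i + (E.mulVec (v w₀)) i)) w₀ := by
  intro i
  have hinner : HasDerivAt (fun w => ((W w).mulVec (v w)) i + b i)
      (((W w₀).mulVec v') i + (E.mulVec (v w₀)) i) w₀ := by
    have hsum : HasDerivAt (fun w => ∑ j, W w i j * v w j)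
        (∑ j, (E i j * v w₀ j + W w₀ i j * v' j)) w₀ :=
      HasDerivAt.fun_sum (fun j _ => (hW i j).mul (hv j))
    have : ((W w₀).mulVec v') i + (E.mulVec (v w₀)) i
        = ∑ j, (E i j * v w₀ j + W w₀ i j * v' j) := by
      simp [Matrix.mulVec, dotProduct, Finset.sum_add_distrib, add_comm]
    rw [this]
    have heq : (fun w => ((W w).mulVec (v w)) i + b i)
        = fun w => (∑ j, W w i j * v w j) + b i := by
      funext w; simp [Matrix.mulVec, dotProduct]
    rw [heq]
    exact hsum.add_const _
  have h := (Real.hasDerivAt_tanh' (((W w₀).mulVec (v w₀)) i + b i)).comp w₀ hinner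
  have heq : (fun w => g w i) = (Real.tanh ∘ fun w => ((W w).mulVec (v w)) i + b i) := by
    funext w; simp [hg]
  rw [heq, hg]
  exact h
end

section
/- Let (Ω, 𝒜, ℙ) be a probability space, let N, m be positive natural numbers, let p ∈ [0,1], and let ξ_1, …, ξ_N : Ω → ℝ be mutually independent random variables each taking value 1 with probability p and value 0 with probability 1 − p. Let A_1, …, A_N and B_1, …, B_N be fixed matrices in Matrix (Fin m) (Fin m) ℝ and let z ∈ Fin m → ℝ be a fixed vector. Then the entrywise expectation of the random vector ((A_N + ξ_N(ω) • B_N) ⬝ (A_{N−1} + ξ_{N−1}(ω) • B_{N−1}) ⬝ ⋯ ⬝ (A_1 + ξ_1(ω) • B_1)).mulVec z equals ((A_N + p • B_N) ⬝ (A_{N−1} + p • B_{N−1}) ⬝ ⋯ ⬝ (A_1 + p • B_1)).mulVec z; that is, for every index i, 𝔼[ (((A_N + ξ_N • B_N) ⬝ ⋯ ⬝ (A_1 + ξ_1 • B_1)).mulVec z) i ] = (((A_N + p • B_N) ⬝ ⋯ ⬝ (A_1 + p • B_1)).mulVec z) i. -/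
open MeasureTheory ProbabilityTheory

/-- Measurability of entries of a list product of measurably-varying matrices. -/
lemma measurable_list_prod_entry {α : Type*} [MeasurableSpace α] {m : ℕ}
    (L : List (α → Matrix (Fin m) (Fin m) ℝ))
    (hL : ∀ F ∈ L, ∀ i k : Fin m, Measurable fun v => F v i k) :
    ∀ i k : Fin m, Measurable fun v =>
      ((L.map (fun F : α → Matrix (Fin m) (Fin m) ℝ => F v)).prod) i k := by
  induction L with
  | nil =>
      intro i k
      simp only [List.map_nil, List.prod_nil, Matrix.one_apply]
      exact measurable_const
  | cons F T ih =>
      intro i k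
      have hF := hL F List.mem_cons_self
      have hT := ih (fun G hG => hL G (List.mem_cons_of_mem _ hG))
      simp only [List.map_cons, List.prod_cons, Matrix.mul_apply]
      exact Finset.measurable_sum _ fun l _ => (hF i l).mul (hT l k)

section Key

variable {Ω : Type*} [MeasurableSpace Ω] (P : Measure Ω) [IsProbabilityMeasure P]
    {N m : ℕ} {p : ℝ} (hp : p ∈ Set.Icc (0 : ℝ) 1)
    {ξ : Fin N → Ω → ℝ}
    (hmeas : ∀ j, Measurable (ξ j))
    (hindep : iIndepFun ξ P)
    (hone : ∀ j, P {ω | ξ j ω = 1} = ENNReal.ofReal p)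
    (hzero : ∀ j, P {ω | ξ j ω = 0} = ENNReal.ofReal (1 - p))

include hp hmeas hone hzero in
lemma xi_ae_indicator (j : Fin N) :
    ξ j =ᵐ[P] Set.indicator {ω | ξ j ω = 1} (fun _ => (1:ℝ)) := by
  have h1 : MeasurableSet {ω | ξ j ω = 1} := (hmeas j) (measurableSet_singleton 1)
  have h0 : MeasurableSet {ω | ξ j ω = 0} := (hmeas j) (measurableSet_singleton 0)
  have hdisj : Disjoint {ω | ξ j ω = 1} {ω | ξ j ω = 0} := by
    rw [Set.disjoint_left]; intro ω hω1 hω0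
    simp only [Set.mem_setOf_eq] at hω1 hω0
    rw [hω1] at hω0; norm_num at hω0
  have hsum : P ({ω | ξ j ω = 1} ∪ {ω | ξ j ω = 0}) = 1 := by
    rw [measure_union hdisj h0, hone j, hzero j,
      ← ENNReal.ofReal_add hp.1 (by linarith [hp.2])]
    norm_num
  have hcompl : P ({ω | ξ j ω = 1} ∪ {ω | ξ j ω = 0})ᶜ = 0 := by
    rw [measure_compl (h1.union h0) (measure_ne_top _ _), hsum, measure_univ]
    simp
  refine ae_iff.2 (measure_mono_null ?_ hcompl)
  intro ω hω
  simp only [Set.mem_compl_iff, Set.mem_union, Set.mem_setOf_eq] at *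
  intro h
  rcases h with h | h
  · exact hω (by simp [Set.indicator_of_mem, Set.mem_setOf_eq, h])
  · refine hω ?_
    rw [h, Set.indicator_of_notMem]
    simp only [Set.mem_setOf_eq, h]
    norm_num

include hp hmeas hone hzero in
lemma xi_integrable (j : Fin N) : Integrable (ξ j) P := by
  have h1 : MeasurableSet {ω | ξ j ω = 1} := (hmeas j) (measurableSet_singleton 1)
  exact Integrable.congr ((integrable_const (1:ℝ)).indicator h1)
    (xi_ae_indicator P hp hmeas hone hzero j).symm

include hp hmeas hone hzero in
lemma xi_integral (j : Fin N) : ∫ ω, ξ j ω ∂P = p := by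
  have h1 : MeasurableSet {ω | ξ j ω = 1} := (hmeas j) (measurableSet_singleton 1)
  rw [integral_congr_ae (xi_ae_indicator P hp hmeas hone hzero j),
    integral_indicator_const _ h1, measureReal_def, hone j]
  simp [ENNReal.toReal_ofReal hp.1]

include hp hmeas hindep hone hzero in
lemma key_lemma (A B : Fin N → Matrix (Fin m) (Fin m) ℝ) :
    ∀ L : List (Fin N), L.Nodup → ∀ i k : Fin m,
      Integrable (fun ω => ((L.map (fun j => A j + ξ j ω • B j)).prod) i k) P ∧
      ∫ ω, ((L.map (fun j => A j + ξ j ω • B j)).prod) i k ∂P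
        = ((L.map (fun j => A j + p • B j)).prod) i k := by
  intro L
  induction L with
  | nil =>
      intro _ i k
      refine ⟨?_, by simp⟩
      simp only [List.map_nil, List.prod_nil]
      exact integrable_const _
  | cons j T ih =>
      intro hnd i k
      have hndT : T.Nodup := (List.nodup_cons.1 hnd).2
      have hjT : j ∉ T := (List.nodup_cons.1 hnd).1
      have ihT := ih hndT
      -- independence of ξ j from entries of the tail product
      have hTprod_indep : ∀ l k' : Fin m,
          IndepFun (ξ j) (fun ω => ((T.map (fun t => A t + ξ t ω • B t)).prod) l k') P := by
        intro l k'
        have hdisj : Disjoint ({j} : Finset (Fin N)) T.toFinset := by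
          simp [Finset.disjoint_left, hjT]
        have hbase := hindep.indepFun_finset {j} T.toFinset hdisj hmeas
        have hφ₁m : Measurable (fun v : (({j} : Finset (Fin N)) → ℝ) =>
            v ⟨j, Finset.mem_singleton_self j⟩) := measurable_pi_apply _
        set G : {x // x ∈ T} → (↥T.toFinset → ℝ) →
            Matrix (Fin m) (Fin m) ℝ :=
          fun t v => A t.1 + v ⟨t.1, List.mem_toFinset.2 t.2⟩ • B t.1 with hG
        have hφ₂m : Measurable (fun v : (↥T.toFinset → ℝ) =>
            (((T.attach.map G).map
              (fun F : (↥T.toFinset → ℝ) → Matrix (Fin m) (Fin m) ℝ =>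
                F v)).prod) l k') := by
          apply measurable_list_prod_entry
          intro F hF i' k''
          simp only [List.mem_map] at hF
          obtain ⟨t, _, rfl⟩ := hF
          simp only [hG, Matrix.add_apply, Matrix.smul_apply, smul_eq_mul]
          exact measurable_const.add ((measurable_pi_apply _).mul measurable_const)
        have hcomp := hbase.comp hφ₁m hφ₂m
        convert hcomp using 1
        · rfl
        ext ω
        simp only [Function.comp_apply, List.map_map]
        exact congrArg (fun L : List (Matrix (Fin m) (Fin m) ℝ) => L.prod l k')
          (List.attach_map_val (l := T) (f := fun t => A t + ξ t ω • B t)).symm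
      -- scalar forms
      have hInt1 : ∀ l : Fin m, Integrable (fun ω => A j i l + ξ j ω * B j i l) P :=
        fun l => (integrable_const _).add
          ((xi_integrable P hp hmeas hone hzero j).mul_const _)
      have hIndComp : ∀ l : Fin m,
          IndepFun (fun ω => A j i l + ξ j ω * B j i l)
            (fun ω => ((T.map (fun t => A t + ξ t ω • B t)).prod) l k) P :=
        fun l => (hTprod_indep l k).comp
          (measurable_const.add (measurable_id.mul measurable_const)) measurable_id
      have hmul_int : ∀ l : Fin m, Integrable
          (fun ω => (A j i l + ξ j ω * B j i l) *
            ((T.map (fun t => A t + ξ t ω • B t)).prod) l k) P :=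
        fun l => (hIndComp l).integrable_mul (hInt1 l) (ihT l k).1
      have hmul_val : ∀ l : Fin m,
          ∫ ω, (A j i l + ξ j ω * B j i l) *
              ((T.map (fun t => A t + ξ t ω • B t)).prod) l k ∂P
            = (A j i l + p * B j i l) *
              ((T.map (fun t => A t + p • B t)).prod) l k := by
        intro l
        have h := (hIndComp l).integral_fun_mul_eq_mul_integral (hInt1 l).1 (ihT l k).1.1
        have hfst : ∫ ω, (A j i l + ξ j ω * B j i l) ∂P = A j i l + p * B j i l := by
          rw [integral_add (integrable_const _)
            ((xi_integrable P hp hmeas hone hzero j).mul_const _)]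
          rw [integral_mul_const, xi_integral P hp hmeas hone hzero j]
          simp
        calc ∫ ω, (A j i l + ξ j ω * B j i l) *
              ((T.map (fun t => A t + ξ t ω • B t)).prod) l k ∂P
            = (∫ ω, (A j i l + ξ j ω * B j i l) ∂P) *
              (∫ ω, ((T.map (fun t => A t + ξ t ω • B t)).prod) l k ∂P) := h
          _ = _ := by rw [hfst, (ihT l k).2]
      constructor
      · simp only [List.map_cons, List.prod_cons, Matrix.mul_apply, Matrix.add_apply,
          Matrix.smul_apply, smul_eq_mul]
        exact integrable_finset_sum _ fun l _ => hmul_int l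
      · simp only [List.map_cons, List.prod_cons, Matrix.mul_apply, Matrix.add_apply,
          Matrix.smul_apply, smul_eq_mul]
        rw [integral_finset_sum _ fun l _ => hmul_int l]
        exact Finset.sum_congr rfl fun l _ => hmul_val l

end Key

/-- Corollary 1 of the paper: in expectation over i.i.d. Bernoulli(p)
detaching variables `ξ_1, …, ξ_N`, the h-detach gradient
`(A_N + ξ_N B_N) ⬝ ⋯ ⬝ (A_1 + ξ_1 B_1) z` equals
`(A_N + p B_N) ⬝ ⋯ ⬝ (A_1 + p B_1) z`.  (Index `j : Fin N` corresponds to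
subscript `j + 1`; `Fin.rev` arranges the factors from subscript `N` on the
left down to subscript `1` on the right.) -/
theorem hdetach_expected_gradient
    {Ω : Type*} [MeasurableSpace Ω] (P : Measure Ω) [IsProbabilityMeasure P]
    (N m : ℕ) (hN : 0 < N) (hm : 0 < m)
    (p : ℝ) (hp : p ∈ Set.Icc (0 : ℝ) 1)
    (ξ : Fin N → Ω → ℝ)
    (hmeas : ∀ j, Measurable (ξ j))
    (hindep : iIndepFun ξ P)
    (hone : ∀ j, P {ω | ξ j ω = 1} = ENNReal.ofReal p)
    (hzero : ∀ j, P {ω | ξ j ω = 0} = ENNReal.ofReal (1 - p))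
    (A B : Fin N → Matrix (Fin m) (Fin m) ℝ) (z : Fin m → ℝ) :
    ∀ i, (∫ ω, (((List.ofFn
            (fun j : Fin N => A j.rev + ξ j.rev ω • B j.rev)).prod).mulVec z) i ∂P)
        = (((List.ofFn
            (fun j : Fin N => A j.rev + p • B j.rev)).prod).mulVec z) i := by
  intro i
  set L : List (Fin N) := List.ofFn (Fin.rev : Fin N → Fin N) with hL
  have hLnd : L.Nodup := (List.nodup_ofFn).mpr Fin.rev_injective
  have key := key_lemma P hp hmeas hindep hone hzero A B L hLnd
  have hrw : ∀ (c : Fin N → ℝ), List.ofFn (fun j : Fin N => A j.rev + c j.rev • B j.rev)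
      = L.map (fun j => A j + c j • B j) := by
    intro c
    rw [hL, List.map_ofFn]
    rfl
  have hrwξ : ∀ ω, List.ofFn (fun j : Fin N => A j.rev + ξ j.rev ω • B j.rev)
      = L.map (fun j => A j + ξ j ω • B j) := fun ω => hrw (fun j => ξ j ω)
  simp only [hrwξ, hrw (fun _ => p)]
  simp only [Matrix.mulVec, dotProduct]
  rw [integral_finset_sum _ fun k _ => ((key i k).1.mul_const (z k))]
  exact Finset.sum_congr rfl fun k _ => by rw [integral_mul_const, (key i k).2]
end
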